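/- Let W = [0,1] × {0} ⊂ ℝ² and let E be the union over n ≥ 1 and odd 0 < k < 2ⁿ of vertical segments of length 2^{-n} centered at (k·2^{-n}, 0). Then K = W ∪ E is a compact connected set, dim_H(K) = 1, H¹(E) = ∞, and there exists β₀ > 0 such that β_K(x, r) ≥ β₀ for all x ∈ W and all 0 < r < 1. -/

import Mathlib

open Metric MeasureTheory Filter Set

noncomputable section

/-- An affine line in a real normed space. -/
def IsLine {E : Type*} [NormedAddCommGroup E] [NormedSpace ℝ E] (L : Set E) : Prop :=
  ∃ a v : E, v ≠ 0 ∧ L = {p | ∃ t : ℝ, p = a + t • v}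

/-- The Jones `β`-number of `K` at `x` and scale `r`:
`inf` over affine lines `L` of `sup_{z ∈ K ∩ B(x,r)} dist(z, L) / r`. -/
noncomputable def betaNum {E : Type*} [NormedAddCommGroup E] [NormedSpace ℝ E]
    (K : Set E) (x : E) (r : ℝ) : ℝ :=
  sInf ((fun L => sSup ((fun z => infDist z L) '' (K ∩ closedBall x r)) / r) ''
    {L : Set E | IsLine L})

/-- The base segment `W = [0,1] × {0}`. -/
def combW : Set (EuclideanSpace ℝ (Fin 2)) := {p | p 0 ∈ Icc (0 : ℝ) 1 ∧ p 1 = 0}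

/-- The union over `n ≥ 1` and odd `0 < k < 2ⁿ` of vertical segments of length `2^{-n}`
centered at `(k·2^{-n}, 0)`. -/
def combE : Set (EuclideanSpace ℝ (Fin 2)) :=
  ⋃ n : ℕ, ⋃ _ : 1 ≤ n, ⋃ k : ℕ, ⋃ _ : k < 2 ^ n ∧ Odd k,
    {p | p 0 = (k : ℝ) / 2 ^ n ∧ p 1 ∈ Icc (-(1 / 2 ^ (n + 1)) : ℝ) (1 / 2 ^ (n + 1))}

open scoped ENNReal NNReal RealInnerProductSpace

section CombAux

abbrev E2 := EuclideanSpace ℝ (Fin 2)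

def pt (a b : ℝ) : E2 := (WithLp.equiv 2 (Fin 2 → ℝ)).symm ![a, b]

@[simp] lemma pt_zero (a b : ℝ) : pt a b 0 = a := rfl

@[simp] lemma pt_one (a b : ℝ) : pt a b 1 = b := rfl

lemma dist_pt (a b c d : ℝ) : dist (pt a b) (pt c d) = Real.sqrt ((a-c)^2 + (b-d)^2) := by
  rw [EuclideanSpace.dist_eq]
  simp [Fin.sum_univ_two, Real.dist_eq, sq_abs]

lemma coord_le_dist (p q : E2) (i : Fin 2) : |p i - q i| ≤ dist p q := by
  rw [EuclideanSpace.dist_eq, ← Real.sqrt_sq_eq_abs]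
  apply Real.sqrt_le_sqrt
  calc (p i - q i)^2 = dist (p i) (q i)^2 := by rw [Real.dist_eq, sq_abs]
    _ ≤ _ := Finset.single_le_sum (f := fun j => dist (p j) (q j)^2) (fun j _ => sq_nonneg _) (Finset.mem_univ i)

lemma pt_eq_self (p : E2) : pt (p 0) (p 1) = p := by
  ext i
  fin_cases i <;> rfl

def seg (n k : ℕ) : Set E2 :=
  {p | p 0 = (k : ℝ) / 2 ^ n ∧ p 1 ∈ Icc (-(1 / 2 ^ (n + 1)) : ℝ) (1 / 2 ^ (n + 1))}

lemma mem_combE {p : E2} : p ∈ combE ↔ ∃ n k, 1 ≤ n ∧ k < 2 ^ n ∧ Odd k ∧ p ∈ seg n k := by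
  constructor
  · rintro h
    simp only [combE, mem_iUnion, mem_setOf_eq] at h
    obtain ⟨n, hn, k, hk, h⟩ := h
    exact ⟨n, k, hn, hk.1, hk.2, h⟩
  · rintro ⟨n, k, hn, hk, hodd, h⟩
    simp only [combE, mem_iUnion, mem_setOf_eq]
    exact ⟨n, hn, k, ⟨hk, hodd⟩, h⟩

lemma cont0 : Continuous (fun p : E2 => p 0) := by
  exact (EuclideanSpace.proj (0 : Fin 2)).continuous

lemma cont1 : Continuous (fun p : E2 => p 1) := (EuclideanSpace.proj (1 : Fin 2)).continuous

lemma isClosed_combW : IsClosed combW :=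
  ((isClosed_Icc.preimage cont0).inter ((isClosed_singleton (x := (0:ℝ))).preimage cont1))

lemma isClosed_seg (n k : ℕ) : IsClosed (seg n k) :=
  ((isClosed_singleton (x := ((k:ℝ)/2^n))).preimage cont0).inter (isClosed_Icc.preimage cont1)

lemma convex_combW : Convex ℝ combW := by
  intro x hx y hy a b ha hb hab
  constructor
  · have : (a • x + b • y) 0 = a * x 0 + b * y 0 := rfl
    rw [this]
    exact (convex_Icc (0:ℝ) 1) hx.1 hy.1 ha hb hab
  · have : (a • x + b • y) 1 = a * x 1 + b * y 1 := rfl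
    rw [this, hx.2, hy.2]; ring

lemma convex_seg (n k : ℕ) : Convex ℝ (seg n k) := by
  intro x hx y hy a b ha hb hab
  constructor
  · have : (a • x + b • y) 0 = a * x 0 + b * y 0 := rfl
    rw [this, hx.1, hy.1]; field_simp; linear_combination (k:ℝ) * hab
  · have : (a • x + b • y) 1 = a * x 1 + b * y 1 := rfl
    rw [this]
    exact (convex_Icc _ _) hx.2 hy.2 ha hb hab

lemma seg_y_bound {n k : ℕ} {q : E2} (h : q ∈ seg n k) : |q 1| ≤ 1 / 2 ^ (n + 1) := by
  rw [abs_le]; exact ⟨neg_le_of_neg_le (by linarith [h.2.1]), h.2.2⟩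

lemma closure_combE_subset : closure combE ⊆ combW ∪ combE := by
  intro p hp
  by_cases hp1 : p 1 = 0
  · left
    refine ⟨?_, hp1⟩
    have hsub : combE ⊆ (fun q : E2 => q 0) ⁻¹' Icc (0:ℝ) 1 := by
      intro q hq
      obtain ⟨n, k, hn, hk, hodd, hq⟩ := mem_combE.1 hq
      have h2 : (0:ℝ) < 2 ^ n := by positivity
      simp only [mem_preimage, mem_Icc, hq.1]
      constructor
      · positivity
      · rw [div_le_one h2]
        exact_mod_cast (le_of_lt hk)
    exact closure_minimal hsub (isClosed_Icc.preimage cont0) hp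
  · right
    have hδ : 0 < |p 1| := abs_pos.2 hp1
    set δ := |p 1| with hδdef
    obtain ⟨N, hN⟩ : ∃ N : ℕ, (1:ℝ) / 2 ^ (N + 2) ≤ δ / 2 := by
      obtain ⟨N, hN⟩ := pow_unbounded_of_one_lt (y := (2:ℝ)) (2/δ) one_lt_two
      refine ⟨N, ?_⟩
      rw [div_le_div_iff₀ (by positivity) (by norm_num)]
      have h1 : (2:ℝ)/δ ≤ 2^N := le_of_lt hN
      have h2 : (2:ℝ)^N ≤ 2^(N+2) := by
        apply pow_le_pow_right₀ one_le_two; omega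
      calc (1:ℝ) * 2 = 2 := by ring
        _ = δ * (2/δ) := by field_simp
        _ ≤ δ * 2^(N+2) := by
            apply mul_le_mul_of_nonneg_left (h1.trans h2) (le_of_lt hδ)
    set F : Set E2 := ⋃ n ∈ Finset.Icc 1 N, ⋃ k ∈ (Finset.range (2^n)).filter (fun k => Odd k), seg n k with hF
    have hFclosed : IsClosed F := by
      apply isClosed_biUnion_finset
      intro n _
      exact isClosed_biUnion_finset fun k _ => isClosed_seg n k
    have hFE : F ⊆ combE := by
      intro q hq
      simp only [hF, mem_iUnion, Finset.mem_Icc, Finset.mem_filter, Finset.mem_range] at hq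
      obtain ⟨n, ⟨hn1, _⟩, k, ⟨hk, hodd⟩, hq⟩ := hq
      exact mem_combE.2 ⟨n, k, hn1, hk, hodd, hq⟩
    have key : combE ∩ ball p (δ/2) ⊆ F := by
      rintro q ⟨hqE, hqb⟩
      obtain ⟨n, k, hn, hk, hodd, hq⟩ := mem_combE.1 hqE
      by_cases hnN : n ≤ N
      · simp only [hF, mem_iUnion, Finset.mem_Icc, Finset.mem_filter, Finset.mem_range]
        exact ⟨n, ⟨hn, hnN⟩, k, ⟨hk, hodd⟩, hq⟩
      · exfalso
        have h1 : |q 1| ≤ 1 / 2 ^ (n+1) := seg_y_bound hq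
        have h2 : (1:ℝ) / 2 ^ (n+1) ≤ 1 / 2 ^ (N+2) := by
          apply div_le_div_of_nonneg_left one_pos.le (by positivity)
          apply pow_le_pow_right₀ one_le_two; omega
        have h3 : |q 1| ≤ δ/2 := h1.trans (h2.trans hN)
        have h4 : δ/2 ≤ |q 1 - p 1| := by
          have := abs_sub_abs_le_abs_sub (p 1) (q 1)
          rw [abs_sub_comm (p 1) (q 1)] at this
          linarith
        have h5 := coord_le_dist q p 1
        rw [mem_ball] at hqb
        linarith
    have hmem : p ∈ closure (combE ∩ ball p (δ/2)) := by
      apply (isOpen_ball).closure_inter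
      exact ⟨hp, mem_ball_self (by positivity)⟩
    exact hFE (hFclosed.closure_subset ((closure_mono key) hmem))

lemma isClosed_K : IsClosed (combW ∪ combE) := by
  rw [← closure_subset_iff_isClosed, closure_union, isClosed_combW.closure_eq]
  exact union_subset subset_union_left closure_combE_subset

lemma center_mem_combW {n k : ℕ} (hn : 1 ≤ n) (hk : k < 2 ^ n) :
    pt ((k:ℝ)/2^n) 0 ∈ combW := by
  have h2 : (0:ℝ) < 2 ^ n := by positivity
  refine ⟨?_, by simp⟩
  rw [show (pt ((k:ℝ)/2^n) 0) 0 = (k:ℝ)/2^n from pt_zero _ _]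
  exact ⟨by positivity, by rw [div_le_one h2]; exact_mod_cast hk.le⟩

lemma center_mem_seg {n k : ℕ} : pt ((k:ℝ)/2^n) 0 ∈ seg n k := by
  refine ⟨by simp, ?_⟩
  rw [pt_one]
  exact ⟨neg_nonpos.2 (by positivity), by positivity⟩

def Tset : ℕ × ℕ → Set E2 := fun nk =>
  if 1 ≤ nk.1 ∧ nk.2 < 2 ^ nk.1 ∧ Odd nk.2 then combW ∪ seg nk.1 nk.2 else combW

lemma K_eq_iUnion : combW ∪ combE = ⋃ nk : ℕ × ℕ, Tset nk := by
  apply Subset.antisymm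
  · rintro p (hp | hp)
    · exact mem_iUnion.2 ⟨(0,0), by simp [Tset, hp]⟩
    · obtain ⟨n, k, hn, hk, hodd, hp⟩ := mem_combE.1 hp
      refine mem_iUnion.2 ⟨(n, k), ?_⟩
      rw [Tset, if_pos ⟨hn, hk, hodd⟩]
      exact Or.inr hp
  · refine iUnion_subset fun nk => ?_
    rw [Tset]
    split_ifs with h
    · rintro p (hp | hp)
      · exact Or.inl hp
      · exact Or.inr (mem_combE.2 ⟨nk.1, nk.2, h.1, h.2.1, h.2.2, hp⟩)
    · exact fun p hp => Or.inl hp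

lemma isConnected_K : IsConnected (combW ∪ combE) := by
  constructor
  · exact ⟨pt 0 0, Or.inl ⟨⟨le_refl 0, by norm_num⟩, pt_one 0 0⟩⟩
  · rw [K_eq_iUnion]
    apply isPreconnected_iUnion
    · refine ⟨pt 0 0, mem_iInter.2 fun nk => ?_⟩
      have hW : pt 0 0 ∈ combW := ⟨⟨le_refl 0, by norm_num⟩, pt_one 0 0⟩
      rw [Tset]
      split_ifs with h
      · exact Or.inl hW
      · exact hW
    · intro nk
      rw [Tset]
      split_ifs with h
      · exact IsPreconnected.union (pt ((nk.2:ℝ)/2^nk.1) 0)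
          (center_mem_combW h.1 h.2.1) center_mem_seg
          convex_combW.isPreconnected (convex_seg _ _).isPreconnected
      · exact convex_combW.isPreconnected

lemma K_bounded : Bornology.IsBounded (combW ∪ combE) := by
  rw [Metric.isBounded_iff_subset_closedBall (pt 0 0)]
  refine ⟨2, fun p hp => ?_⟩
  have h01 : p 0 ∈ Icc (0:ℝ) 1 ∧ |p 1| ≤ 1 := by
    rcases hp with hp | hp
    · exact ⟨hp.1, by rw [hp.2]; norm_num⟩
    · obtain ⟨n, k, hn, hk, hodd, hp⟩ := mem_combE.1 hp
      have h2 : (0:ℝ) < 2 ^ n := by positivity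
      refine ⟨⟨by rw [hp.1]; positivity, ?_⟩, ?_⟩
      · rw [hp.1, div_le_one h2]; exact_mod_cast hk.le
      · refine (seg_y_bound hp).trans ?_
        rw [div_le_one (by positivity)]
        exact one_le_pow₀ one_le_two
  rw [mem_closedBall, EuclideanSpace.dist_eq, Fin.sum_univ_two]
  have e0 : dist (p 0) (pt 0 0 0) = |p 0| := by rw [pt_zero, Real.dist_eq, sub_zero]
  have e1 : dist (p 1) (pt 0 0 1) = |p 1| := by rw [pt_one, Real.dist_eq, sub_zero]
  rw [e0, e1]
  have hb0 : |p 0| ≤ 1 := abs_le.2 ⟨by linarith [h01.1.1], h01.1.2⟩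
  calc Real.sqrt (|p 0|^2 + |p 1|^2) ≤ Real.sqrt 4 := by
        apply Real.sqrt_le_sqrt
        nlinarith [abs_nonneg (p 0), abs_nonneg (p 1), h01.2]
    _ = 2 := by rw [show (4:ℝ) = 2^2 by norm_num, Real.sqrt_sq (by norm_num : (0:ℝ) ≤ 2)]

def vert (c : ℝ) : ℝ → E2 := fun t => pt c t

lemma isometry_vert (c : ℝ) : Isometry (vert c) := by
  apply Isometry.of_dist_eq
  intro s t
  simp only [vert]
  rw [dist_pt, Real.dist_eq]
  simp [Real.sqrt_sq_eq_abs]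

lemma seg_eq_image (n k : ℕ) :
    seg n k = vert ((k:ℝ)/2^n) '' Icc (-(1 / 2 ^ (n + 1)) : ℝ) (1 / 2 ^ (n + 1)) := by
  ext p
  constructor
  · intro hp
    exact ⟨p 1, hp.2, by rw [vert, ← hp.1, pt_eq_self]⟩
  · rintro ⟨t, ht, rfl⟩
    exact ⟨by simp [vert], by simpa [vert] using ht⟩

lemma measure_seg (n k : ℕ) : μH[1] (seg n k) = ENNReal.ofReal ((1:ℝ)/2^n) := by
  rw [seg_eq_image, (isometry_vert _).hausdorffMeasure_image (Or.inl zero_le_one),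
    hausdorffMeasure_real, Real.volume_Icc]
  congr 1
  have h2 : (2:ℝ)^(n+1) = 2 * 2^n := by ring
  field_simp [h2]
  ring

lemma dyadic_inj {n n' k k' : ℕ} (ho : Odd k) (ho' : Odd k')
    (h : (k:ℝ)/2^n = (k':ℝ)/2^n') : n = n' ∧ k = k' := by
  have h2 : (0:ℝ) < 2^n := by positivity
  have h2' : (0:ℝ) < 2^n' := by positivity
  rw [div_eq_div_iff h2.ne' h2'.ne'] at h
  have hnat : k * 2^n' = k' * 2^n := by exact_mod_cast h
  have hmain : ∀ m m' j j' : ℕ, Odd j → Odd j' → j * 2^m' = j' * 2^m → m ≤ m' → m = m' := by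
    intro m m' j j' hj hj' heq hle
    by_contra hne
    have hlt : m < m' := lt_of_le_of_ne hle hne
    have : j' * 2^m = j * 2^m * 2^(m'-m) := by
      rw [← heq, mul_assoc, ← pow_add]
      congr 2
      omega
    have hj'eq : j' = j * 2^(m'-m) :=
      Nat.eq_of_mul_eq_mul_right (by positivity : 0 < 2^m) (by rw [this]; ring)
    have : 2 ∣ j' := by
      rw [hj'eq]
      exact Dvd.dvd.mul_left (dvd_pow_self 2 (by omega : m' - m ≠ 0)) j
    exact (Nat.not_even_iff_odd.2 hj') (even_iff_two_dvd.2 this)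
  have hnn' : n = n' := by
    rcases le_total n n' with hle | hle
    · exact hmain n n' k k' ho ho' hnat hle
    · exact (hmain n' n k' k ho' ho hnat.symm hle).symm
  subst hnn'
  refine ⟨rfl, ?_⟩
  have := Nat.eq_of_mul_eq_mul_right (by positivity : 0 < 2^n) hnat
  exact this

lemma seg_disjoint {n n' k k' : ℕ} (ho : Odd k) (ho' : Odd k')
    (hne : (n, k) ≠ (n', k')) : Disjoint (seg n k) (seg n' k') := by
  rw [Set.disjoint_left]
  rintro p hp hp'
  have : (k:ℝ)/2^n = (k':ℝ)/2^n' := by rw [← hp.1, hp'.1]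
  obtain ⟨h1, h2⟩ := dyadic_inj ho ho' this
  exact hne (by rw [h1, h2])

lemma card_odds (n : ℕ) (hn : 1 ≤ n) :
    2^(n-1) ≤ ((Finset.range (2^n)).filter (fun k => Odd k)).card := by
  have := Finset.card_le_card_of_injOn (f := fun j => 2*j+1)
    (s := Finset.range (2^(n-1))) (t := (Finset.range (2^n)).filter (fun k => Odd k))
    ?_ ?_
  · simpa using this
  · intro j hj
    simp only [Finset.coe_range, Set.mem_Iio] at hj
    simp only [Finset.coe_filter, Finset.mem_range, Set.mem_setOf_eq]
    constructor
    · have : 2^n = 2 * 2^(n-1) := by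
        rw [← pow_succ']
        congr 1
        omega
      omega
    · exact ⟨j, by ring⟩
  · intro a _ b _ hab
    simpa using hab

lemma measure_combE : μH[1] combE = ⊤ := by
  have hhalf : ENNReal.ofReal ((1:ℝ)/2) = 2⁻¹ := by
    rw [show (1:ℝ)/2 = (2:ℝ)⁻¹ by norm_num, ENNReal.ofReal_inv_of_pos (by norm_num)]
    norm_num
  have key : ∀ N : ℕ, (N : ℝ≥0∞) * 2⁻¹ ≤ μH[1] combE := by
    intro N
    set S : Finset (Σ _ : ℕ, ℕ) :=
      (Finset.Icc 1 N).sigma (fun n => (Finset.range (2^n)).filter (fun k => Odd k)) with hS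
    have hmemS : ∀ p ∈ S, 1 ≤ p.1 ∧ p.2 < 2^p.1 ∧ Odd p.2 := by
      intro p hp
      simp only [hS, Finset.mem_sigma, Finset.mem_Icc, Finset.mem_filter, Finset.mem_range] at hp
      exact ⟨hp.1.1, hp.2.1, hp.2.2⟩
    have hsub : (⋃ p ∈ S, seg p.1 p.2) ⊆ combE := by
      refine iUnion₂_subset fun p hp => ?_
      obtain ⟨h1, h2, h3⟩ := hmemS p hp
      exact fun q hq => mem_combE.2 ⟨p.1, p.2, h1, h2, h3, hq⟩
    have hdisj : (↑S : Set (Σ _ : ℕ, ℕ)).PairwiseDisjoint (fun p : Σ _ : ℕ, ℕ => seg p.1 p.2) := by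
      intro p hp q hq hpq
      have hop := (hmemS p (by exact_mod_cast hp)).2.2
      have hoq := (hmemS q (by exact_mod_cast hq)).2.2
      refine seg_disjoint hop hoq fun h => hpq ?_
      have h1 : p.1 = q.1 := congrArg Prod.fst h
      have h2 : p.2 = q.2 := congrArg Prod.snd h
      exact Sigma.ext h1 (heq_of_eq h2)
    have hmeas := measure_biUnion_finset hdisj
      (fun p _ => (isClosed_seg p.1 p.2).measurableSet) (μ := μH[1])
    calc (N : ℝ≥0∞) * 2⁻¹
        = ∑ n ∈ Finset.Icc 1 N, 2⁻¹ := by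
          rw [Finset.sum_const, Nat.card_Icc]
          simp [nsmul_eq_mul]
      _ ≤ ∑ n ∈ Finset.Icc 1 N, ∑ k ∈ (Finset.range (2^n)).filter (fun k => Odd k),
            ENNReal.ofReal ((1:ℝ)/2^n) := by
          apply Finset.sum_le_sum
          intro n hn
          rw [Finset.sum_const, nsmul_eq_mul]
          have hn1 : 1 ≤ n := (Finset.mem_Icc.1 hn).1
          calc (2⁻¹ : ℝ≥0∞) = ENNReal.ofReal ((2^(n-1) : ℕ) * ((1:ℝ)/2^n)) := by
                rw [← hhalf]
                congr 1
                have : (2:ℝ)^n = 2^(n-1) * 2 := by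
                  rw [← pow_succ]
                  congr 1
                  omega
                push_cast
                rw [this]
                field_simp
            _ = (2^(n-1) : ℕ) * ENNReal.ofReal ((1:ℝ)/2^n) := by
                rw [ENNReal.ofReal_mul (by positivity), ENNReal.ofReal_natCast]
            _ ≤ _ := by
                apply mul_le_mul_left
                exact_mod_cast Nat.cast_le.2 (card_odds n hn1)
      _ = ∑ p ∈ S, ENNReal.ofReal ((1:ℝ)/2^p.1) := by
          rw [hS, Finset.sum_sigma]
      _ = ∑ p ∈ S, μH[1] (seg p.1 p.2) := by
          apply Finset.sum_congr rfl
          intro p _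
          rw [measure_seg]
      _ = μH[1] (⋃ p ∈ S, seg p.1 p.2) := hmeas.symm
      _ ≤ μH[1] combE := measure_mono hsub
  have htop : ∀ N : ℕ, (N : ℝ≥0∞) ≤ μH[1] combE := by
    intro N
    have := key (2 * N)
    have h2 : ((2 * N : ℕ) : ℝ≥0∞) * 2⁻¹ = N := by
      push_cast
      rw [mul_comm (2:ℝ≥0∞) (N:ℝ≥0∞), mul_assoc, ENNReal.mul_inv_cancel (by norm_num) (by norm_num), mul_one]
    rwa [h2] at this
  rw [← top_le_iff, ← ENNReal.iSup_natCast]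
  exact iSup_le htop

lemma dimH_seg_le (n k : ℕ) : dimH (seg n k) ≤ 1 := by
  rw [seg_eq_image]
  refine le_trans ((isometry_vert _).lipschitz.dimH_image_le _) ?_
  refine le_trans (dimH_mono (subset_univ _)) ?_
  rw [Real.dimH_univ]

lemma dimH_combW_le : dimH combW ≤ 1 := by
  have : combW ⊆ (fun t : ℝ => pt t 0) '' univ := by
    intro p hp
    refine ⟨p 0, mem_univ _, ?_⟩
    show pt (p 0) 0 = p
    rw [← hp.2, pt_eq_self]
  refine le_trans (dimH_mono this) ?_
  have hlip : LipschitzWith 1 (fun t : ℝ => pt t 0) := by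
    have : Isometry (fun t : ℝ => pt t 0) := by
      apply Isometry.of_dist_eq
      intro s t
      rw [dist_pt, Real.dist_eq]
      simp [Real.sqrt_sq_eq_abs]
    exact this.lipschitz
  refine le_trans (hlip.dimH_image_le _) ?_
  rw [Real.dimH_univ]

lemma dimH_K : dimH (combW ∪ combE) = 1 := by
  apply le_antisymm
  · rw [dimH_union]
    apply max_le dimH_combW_le
    have hE : combE = ⋃ n : ℕ, ⋃ _ : 1 ≤ n, ⋃ k : ℕ, ⋃ _ : k < 2 ^ n ∧ Odd k, seg n k := rfl
    rw [hE, dimH_iUnion]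
    refine iSup_le fun n => ?_
    rw [dimH_iUnion]
    refine iSup_le fun _ => ?_
    rw [dimH_iUnion]
    refine iSup_le fun k => ?_
    rw [dimH_iUnion]
    exact iSup_le fun _ => dimH_seg_le n k
  · have h1 : (1 : ℝ≥0∞) ≤ dimH combE := by
      have := le_dimH_of_hausdorffMeasure_eq_top (X := E2) (d := 1) (s := combE) ?_
      · simpa using this
      · simpa using measure_combE
    exact h1.trans (dimH_mono subset_union_right)

lemma inner_coords (u w : E2) : ⟪u, w⟫ = u 0 * w 0 + u 1 * w 1 := by
  simp [PiLp.inner_apply, RCLike.inner_apply, Fin.sum_univ_two, mul_comm]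

lemma sub_coords (u w : E2) (i : Fin 2) : (u - w) i = u i - w i := rfl

lemma norm_le_coords (p : E2) : ‖p‖ ≤ |p 0| + |p 1| := by
  rw [EuclideanSpace.norm_eq, Fin.sum_univ_two]
  rw [show |p 0| + |p 1| = Real.sqrt ((|p 0| + |p 1|)^2) by
    rw [Real.sqrt_sq (by positivity)]]
  apply Real.sqrt_le_sqrt
  simp only [Real.norm_eq_abs]
  nlinarith [abs_nonneg (p 0), abs_nonneg (p 1)]

lemma eq_zero_of_coords {v : E2} (h0 : v 0 = 0) (h1 : v 1 = 0) : v = 0 := by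
  rw [← pt_eq_self v, h0, h1]
  ext i
  fin_cases i <;> rfl

lemma dist_pt_le (a b c d : ℝ) : dist (pt a b) (pt c d) ≤ |a - c| + |b - d| := by
  rw [dist_pt]
  rw [show |a - c| + |b - d| = Real.sqrt ((|a - c| + |b - d|)^2) by
    rw [Real.sqrt_sq (by positivity)]]
  apply Real.sqrt_le_sqrt
  nlinarith [abs_nonneg (a - c), abs_nonneg (b - d), sq_abs (a-c), sq_abs (b-d)]

lemma le_infDist_line (c v w z : E2) (hw : w ≠ 0) (horth : ⟪v, w⟫ = 0) :
    |⟪z - c, w⟫| / ‖w‖ ≤ infDist z {p : E2 | ∃ t : ℝ, p = c + t • v} := by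
  have hne : ({p : E2 | ∃ t : ℝ, p = c + t • v}).Nonempty := ⟨c, 0, by simp⟩
  have hnw : 0 < ‖w‖ := norm_pos_iff.2 hw
  by_contra hcon
  push_neg at hcon
  obtain ⟨y, ⟨t, rfl⟩, hy⟩ := (infDist_lt_iff hne).1 hcon
  have key : |⟪z - c, w⟫| = |⟪z - (c + t • v), w⟫| := by
    congr 1
    rw [show z - (c + t • v) = (z - c) - t • v by abel,
      inner_sub_left (𝕜 := ℝ) (z - c) (t • v) w, real_inner_smul_left, horth, mul_zero, sub_zero]
  have hcs : |⟪z - (c + t • v), w⟫| ≤ ‖z - (c + t • v)‖ * ‖w‖ := abs_real_inner_le_norm _ _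
  rw [← dist_eq_norm] at hcs
  rw [key, lt_div_iff₀ hnw] at hy
  linarith

set_option maxHeartbeats 2000000 in
lemma beta_lower {x : E2} (hx : x ∈ combW) {r : ℝ} (hr : 0 < r) (hr1 : r < 1) :
    (1/32 : ℝ) ≤ betaNum (combW ∪ combE) x r := by
  obtain ⟨hx0, hx1⟩ := hx
  -- choose the base interval [a, a + r/2]
  obtain ⟨a, ha0, ha1, hax, hxa⟩ :
      ∃ a : ℝ, 0 ≤ a ∧ a + r/2 ≤ 1 ∧ a ≤ x 0 ∧ x 0 ≤ a + r/2 := by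
    by_cases hc : x 0 ≤ 1/2
    · exact ⟨x 0, hx0.1, by linarith, le_refl _, by linarith⟩
    · exact ⟨x 0 - r/2, by linarith, by linarith [hx0.2], by linarith, by linarith⟩
  -- choose the scale n
  obtain ⟨n, hn1, hn, hnmin⟩ : ∃ n : ℕ, 1 ≤ n ∧ (1:ℝ)/2^n ≤ r/4 ∧ r/8 < 1/2^n := by
    have hPex : ∃ n : ℕ, (1:ℝ)/2^n ≤ r/4 := by
      obtain ⟨N, hN⟩ := pow_unbounded_of_one_lt (y := (2:ℝ)) (4/r) one_lt_two
      refine ⟨N, ?_⟩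
      rw [div_le_div_iff₀ (by positivity) (by norm_num)]
      rw [div_lt_iff₀ hr] at hN
      nlinarith
    refine ⟨Nat.find hPex, ?_, Nat.find_spec hPex, ?_⟩
    · rcases Nat.eq_zero_or_pos (Nat.find hPex) with h | h
      · exfalso
        have := Nat.find_spec hPex
        rw [h] at this
        norm_num at this
        linarith
      · exact h
    · set n := Nat.find hPex with hn_def
      have hn1 : 1 ≤ n := by
        rcases Nat.eq_zero_or_pos n with h | h
        · exfalso
          have := Nat.find_spec hPex
          rw [← hn_def, h] at this
          norm_num at this
          linarith
        · exact h
      have hprev := Nat.find_min hPex (m := n - 1) (by omega)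
      push_neg at hprev
      have h2 : (2:ℝ)^n = 2^(n-1) * 2 := by
        rw [← pow_succ]
        congr 1
        omega
      have hprev' : r/4 < 1/2^(n-1) := by linarith
      calc r/8 < (1/2^(n-1))/2 := by linarith
        _ = 1/2^n := by rw [h2]; ring
  have h2n : (0:ℝ) < 2^n := by positivity
  -- choose k
  obtain ⟨k, hk_odd, hklt, hcka, hckb⟩ :
      ∃ k : ℕ, Odd k ∧ k < 2^n ∧ a ≤ (k:ℝ)/2^n ∧ (k:ℝ)/2^n ≤ a + r/2 := by
    set m := ⌈a * 2^n⌉₊ with hm_def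
    have hma : a * 2^n ≤ m := Nat.le_ceil _
    have hmb : (m:ℝ) < a * 2^n + 1 := Nat.ceil_lt_add_one (by positivity)
    obtain ⟨k, hk_odd, hmk, hkm⟩ : ∃ k : ℕ, Odd k ∧ m ≤ k ∧ k ≤ m + 1 := by
      rcases Nat.even_or_odd m with h | h
      · exact ⟨m + 1, h.add_one, by omega, le_refl _⟩
      · exact ⟨m, h, le_refl _, by omega⟩
    have hcka : a ≤ (k:ℝ)/2^n := by
      rw [le_div_iff₀ h2n]
      calc a * 2^n ≤ m := hma
        _ ≤ (k:ℝ) := by exact_mod_cast hmk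
    have hckb : (k:ℝ)/2^n ≤ a + r/2 := by
      rw [div_le_iff₀ h2n]
      have hkm' : (k:ℝ) ≤ m + 1 := by exact_mod_cast hkm
      have h4 : (2:ℝ) ≤ (r/2) * 2^n := by
        rw [div_le_div_iff₀ (by positivity) (by norm_num)] at hn
        nlinarith
      nlinarith
    have hck01 : (k:ℝ)/2^n ≤ 1 := by linarith
    have hklt : k < 2^n := by
      have hkle : (k:ℝ) ≤ 2^n := by
        rw [div_le_one h2n] at hck01
        exact hck01
      have hkle' : k ≤ 2^n := by exact_mod_cast hkle
      rcases lt_or_eq_of_le hkle' with h | h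
      · exact h
      · exfalso
        have heven : Even (2^n) := Nat.even_pow.2 ⟨even_two, Nat.one_le_iff_ne_zero.1 hn1⟩
        rw [h] at hk_odd
        exact (Nat.not_odd_iff_even.2 heven) hk_odd
    exact ⟨k, hk_odd, hklt, hcka, hckb⟩
  set ck : ℝ := (k:ℝ)/2^n with hck_def
  -- the four points
  have hxeq : x = pt (x 0) 0 := by rw [← hx1, pt_eq_self]
  have hdistW : ∀ s : ℝ, a ≤ s → s ≤ a + r/2 → dist (pt s 0) x ≤ r := by
    intro s h1 h2
    rw [hxeq]
    refine (dist_pt_le _ _ _ _).trans ?_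
    rw [sub_self, abs_zero, add_zero, abs_le]
    constructor <;> linarith
  have hdistQ : ∀ b : ℝ, |b| ≤ r/16 → dist (pt ck b) x ≤ r := by
    intro b hb
    rw [hxeq]
    refine (dist_pt_le _ _ _ _).trans ?_
    rw [sub_zero]
    have h1 : |ck - x 0| ≤ r/2 := by
      rw [abs_le]
      constructor <;> linarith
    linarith
  have hsegmem : ∀ b : ℝ, |b| ≤ r/16 → pt ck b ∈ combE := by
    intro b hb
    refine mem_combE.2 ⟨n, k, hn1, hklt, hk_odd, by simp [seg, hck_def], ?_⟩
    have hhn : r/16 ≤ 1/2^(n+1) := by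
      have h8 : r * 2^n < 8 := by
        rw [div_lt_div_iff₀ (by norm_num) (by positivity)] at hnmin
        linarith
      rw [div_le_div_iff₀ (by norm_num) (by positivity)]
      have hpow : (2:ℝ)^(n+1) = 2^n * 2 := by ring
      rw [hpow]
      nlinarith
    rw [abs_le] at hb
    constructor
    · simp only [pt_one]
      linarith
    · simp only [pt_one]
      linarith
  have hWmem : ∀ s : ℝ, a ≤ s → s ≤ a + r/2 → pt s 0 ∈ combW := by
    intro s h1 h2
    refine ⟨⟨?_, ?_⟩, pt_one s 0⟩ <;> rw [pt_zero] <;> linarith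
  -- main estimate
  rw [betaNum]
  apply le_csInf
  · refine ⟨_, ⟨{p : E2 | ∃ t : ℝ, p = 0 + t • pt 1 0}, ⟨0, pt 1 0, ?_, rfl⟩, rfl⟩⟩
    intro h
    have : (pt 1 0) 0 = (0 : E2) 0 := by rw [h]
    simpa using this
  · rintro b ⟨L, ⟨c, v, hv, rfl⟩, rfl⟩
    set L : Set E2 := {p : E2 | ∃ t : ℝ, p = c + t • v} with hL_def
    set w : E2 := pt (-(v 1)) (v 0) with hw_def
    have hvcoord : v 0 ≠ 0 ∨ v 1 ≠ 0 := by
      by_contra h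
      push_neg at h
      exact hv (eq_zero_of_coords h.1 h.2)
    have hw : w ≠ 0 := by
      intro h
      have h0 : w 0 = 0 := by rw [h]; rfl
      have h1 : w 1 = 0 := by rw [h]; rfl
      rw [hw_def, pt_zero] at h0
      rw [hw_def, pt_one] at h1
      rcases hvcoord with h' | h'
      · exact h' h1
      · exact h' (by linarith [neg_eq_zero.1 h0])
    have hnw : 0 < ‖w‖ := norm_pos_iff.2 hw
    have horth : ⟪v, w⟫ = 0 := by
      rw [inner_coords, hw_def, pt_zero, pt_one]
      ring
    set M := sSup ((fun z => infDist z L) '' ((combW ∪ combE) ∩ closedBall x r)) with hM_def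
    have hbdd : BddAbove ((fun z => infDist z L) '' ((combW ∪ combE) ∩ closedBall x r)) := by
      refine ⟨r + dist x c, ?_⟩
      rintro y ⟨z, ⟨_, hz⟩, rfl⟩
      have hcL : c ∈ L := ⟨0, by simp⟩
      refine (infDist_le_dist_of_mem hcL).trans ?_
      calc dist z c ≤ dist z x + dist x c := dist_triangle _ _ _
        _ ≤ r + dist x c := by
            rw [mem_closedBall] at hz
            linarith
    have hMz : ∀ z : E2, z ∈ (combW ∪ combE) ∩ closedBall x r → |⟪z - c, w⟫| ≤ M * ‖w‖ := by
      intro z hz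
      have h1 := le_infDist_line c v w z hw horth
      have h2 : infDist z L ≤ M := le_csSup hbdd (mem_image_of_mem _ hz)
      rw [div_le_iff₀ hnw] at h1
      nlinarith
    -- apply to the four points
    have hP1 : |⟪pt a 0 - c, w⟫| ≤ M * ‖w‖ :=
      hMz _ ⟨Or.inl (hWmem a (le_refl _) (by linarith)),
        mem_closedBall.2 (hdistW a (le_refl _) (by linarith))⟩
    have hP2 : |⟪pt (a + r/2) 0 - c, w⟫| ≤ M * ‖w‖ :=
      hMz _ ⟨Or.inl (hWmem _ (by linarith) (le_refl _)),
        mem_closedBall.2 (hdistW _ (by linarith) (le_refl _))⟩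
    have habs16 : |r/16| ≤ r/16 := by rw [abs_of_nonneg (by linarith)]
    have habs16' : |(-(r/16))| ≤ r/16 := by rw [abs_neg, abs_of_nonneg (by linarith)]
    have hQ1 : |⟪pt ck (r/16) - c, w⟫| ≤ M * ‖w‖ :=
      hMz _ ⟨Or.inr (hsegmem _ habs16), mem_closedBall.2 (hdistQ _ habs16)⟩
    have hQ2 : |⟪pt ck (-(r/16)) - c, w⟫| ≤ M * ‖w‖ :=
      hMz _ ⟨Or.inr (hsegmem _ habs16'), mem_closedBall.2 (hdistQ _ habs16')⟩
    -- coordinates of the inner products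
    have hGcoord : ∀ s t : ℝ, ⟪pt s t - c, w⟫ = (s - c 0) * (-(v 1)) + (t - c 1) * (v 0) := by
      intro s t
      rw [inner_coords, sub_coords, sub_coords, pt_zero, pt_one, hw_def, pt_zero, pt_one]
    rw [hGcoord] at hP1 hP2 hQ1 hQ2
    -- extract bounds on |v 0| and |v 1|
    have hv1 : r/2 * |v 1| ≤ 2 * (M * ‖w‖) := by
      have := abs_sub_abs_le_abs_sub ((a + r/2 - c 0) * (-(v 1)) + (0 - c 1) * (v 0))
        ((a - c 0) * (-(v 1)) + (0 - c 1) * (v 0))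
      have heq : (a + r/2 - c 0) * (-(v 1)) + (0 - c 1) * (v 0)
          - ((a - c 0) * (-(v 1)) + (0 - c 1) * (v 0)) = -(r/2 * v 1) := by ring
      have h3 := abs_sub ((a + r/2 - c 0) * (-(v 1)) + (0 - c 1) * (v 0))
        ((a - c 0) * (-(v 1)) + (0 - c 1) * (v 0))
      calc r/2 * |v 1| = |(a + r/2 - c 0) * (-(v 1)) + (0 - c 1) * (v 0)
          - ((a - c 0) * (-(v 1)) + (0 - c 1) * (v 0))| := by
            rw [heq, abs_neg, abs_mul, abs_of_nonneg (by linarith : (0:ℝ) ≤ r/2)]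
        _ ≤ _ := by
            refine (abs_sub _ _).trans ?_
            linarith
    have hv0 : r/8 * |v 0| ≤ 2 * (M * ‖w‖) := by
      have heq : (ck - c 0) * (-(v 1)) + (r/16 - c 1) * (v 0)
          - ((ck - c 0) * (-(v 1)) + (-(r/16) - c 1) * (v 0)) = (r/8) * v 0 := by ring
      calc r/8 * |v 0| = |(ck - c 0) * (-(v 1)) + (r/16 - c 1) * (v 0)
          - ((ck - c 0) * (-(v 1)) + (-(r/16) - c 1) * (v 0))| := by
            rw [heq, abs_mul, abs_of_nonneg (by linarith : (0:ℝ) ≤ r/8)]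
        _ ≤ _ := by
            refine (abs_sub _ _).trans ?_
            linarith
    -- conclude
    have hwle : ‖w‖ ≤ |v 1| + |v 0| := by
      refine (norm_le_coords w).trans ?_
      rw [hw_def, pt_zero, pt_one, abs_neg]
    have hM0 : 0 ≤ M := by
      refine le_trans (infDist_nonneg (s := L) (x := pt a 0)) (le_csSup hbdd ?_)
      exact ⟨pt a 0, ⟨Or.inl (hWmem a (le_refl _) (by linarith)),
        mem_closedBall.2 (hdistW a (le_refl _) (by linarith))⟩, rfl⟩
    have hrw : r * ‖w‖ ≤ 20 * M * ‖w‖ := by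
      calc r * ‖w‖ ≤ r * (|v 1| + |v 0|) := by
            apply mul_le_mul_of_nonneg_left hwle (le_of_lt hr)
        _ = 2 * (r/2 * |v 1|) + 8 * (r/8 * |v 0|) := by ring
        _ ≤ 2 * (2 * (M * ‖w‖)) + 8 * (2 * (M * ‖w‖)) := by
            have h1 := mul_le_mul_of_nonneg_left hv1 (by norm_num : (0:ℝ) ≤ 2)
            have h2 := mul_le_mul_of_nonneg_left hv0 (by norm_num : (0:ℝ) ≤ 8)
            linarith
        _ = 20 * M * ‖w‖ := by ring
    have hrM : r ≤ 20 * M := le_of_mul_le_mul_right hrw hnw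
    rw [le_div_iff₀ hr]
    linarith

end CombAux

/-- `K = W ∪ E` (the comb) is compact and connected, `dim_H(K) = 1`,
`H¹(E) = ∞`, and the β-numbers of `K` at points of `W` are uniformly bounded below. -/
theorem comb_properties :
    IsCompact (combW ∪ combE) ∧ IsConnected (combW ∪ combE) ∧
      dimH (combW ∪ combE) = 1 ∧ μH[1] combE = ⊤ ∧
      ∃ β₀ : ℝ, 0 < β₀ ∧ ∀ x ∈ combW, ∀ r : ℝ, 0 < r → r < 1 →
        β₀ ≤ betaNum (combW ∪ combE) x r := by
  refine ⟨?_, isConnected_K, dimH_K, measure_combE,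
    ⟨1/32, by norm_num, fun x hx r hr hr1 => beta_lower hx hr hr1⟩⟩
  exact Metric.isCompact_of_isClosed_isBounded isClosed_K K_bounded
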